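/- Let P be a user distribution on relevance vectors over a finite document set X with metric D, and suppose P is conditionally L-continuous with respect to (X, D). Then for all documents x, y ∈ X and every subset S ⊆ X, the conditional probability P(π(x) = 1 and π(y) = 0 | Z_S) ≤ D(x, y). -/

import Mathlib

open scoped Classical
open Finset

/-- Probability of an event under a distribution `P` on relevance vectors. -/
noncomputable def pr {X : Type*} [Fintype X] [DecidableEq X]
    (P : (X → Bool) → ℝ) (E : Set (X → Bool)) : ℝ :=
  ∑ π : X → Bool, if π ∈ E then P π else 0

/-- Conditional probability `P(E | F)`. -/
noncomputable def condPr {X : Type*} [Fintype X] [DecidableEq X]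
    (P : (X → Bool) → ℝ) (E F : Set (X → Bool)) : ℝ :=
  pr P (E ∩ F) / pr P F

/-- The event `Z_S` that all documents in `S` are irrelevant. -/
def ZS {X : Type*} (S : Finset X) : Set (X → Bool) :=
  {π | ∀ s ∈ S, π s = false}

/-- Conditional pointwise mean `μ(x | Z_S)`. -/
noncomputable def condMean {X : Type*} [Fintype X] [DecidableEq X]
    (P : (X → Bool) → ℝ) (x : X) (S : Finset X) : ℝ :=
  condPr P {π | π x = true} (ZS S)

lemma pr_mono {X : Type*} [Fintype X] [DecidableEq X]
    (P : (X → Bool) → ℝ) (hP0 : ∀ π, 0 ≤ P π) {E F : Set (X → Bool)}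
    (h : E ⊆ F) : pr P E ≤ pr P F := by
  unfold pr
  apply Finset.sum_le_sum
  intro π _
  by_cases hE : π ∈ E
  · simp [hE, h hE]
  · by_cases hF : π ∈ F <;> simp [hE, hF, hP0 π]

lemma pr_nonneg {X : Type*} [Fintype X] [DecidableEq X]
    (P : (X → Bool) → ℝ) (hP0 : ∀ π, 0 ≤ P π) (E : Set (X → Bool)) :
    0 ≤ pr P E := by
  unfold pr
  apply Finset.sum_nonneg
  intro π _
  by_cases hE : π ∈ E <;> simp [hE, hP0 π]

/-- under conditional L-continuity,
`P(π(x) = 1 ∧ π(y) = 0 | Z_S) ≤ D(x, y)`. -/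
theorem cond_prob_relevant_irrelevant_le_dist
    {X : Type*} [Fintype X] [DecidableEq X] [MetricSpace X]
    (P : (X → Bool) → ℝ)
    (hP0 : ∀ π, 0 ≤ P π) (hP1 : ∑ π : X → Bool, P π = 1)
    (hZ : ∀ S : Finset X, 0 < pr P (ZS S))
    (hLip : ∀ (x y : X) (S : Finset X),
      |condMean P x S - condMean P y S| ≤ dist x y)
    (x y : X) (S : Finset X) :
    condPr P {π | π x = true ∧ π y = false} (ZS S) ≤ dist x y := by
  set S' := insert y S with hS'
  -- event equality
  have hevent : ({π : X → Bool | π x = true ∧ π y = false} ∩ ZS S)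
      = ({π : X → Bool | π x = true} ∩ ZS S') := by
    ext π
    simp only [Set.mem_inter_iff, Set.mem_setOf_eq, ZS, hS', Finset.mem_insert]
    constructor
    · rintro ⟨⟨hx, hy⟩, hs⟩
      exact ⟨hx, fun s hs' => hs'.elim (fun h => h ▸ hy) (hs s)⟩
    · rintro ⟨hx, hs⟩
      exact ⟨⟨hx, hs y (Or.inl rfl)⟩, fun s h => hs s (Or.inr h)⟩
  -- μ(y | Z_{S'}) = 0
  have hmuY : condMean P y S' = 0 := by
    have : ({π : X → Bool | π y = true} ∩ ZS S') = ∅ := by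
      ext π
      simp only [Set.mem_inter_iff, Set.mem_setOf_eq, ZS, hS', Finset.mem_insert,
        Set.mem_empty_iff_false, iff_false]
      rintro ⟨hy, hs⟩
      simp [hs y (Or.inl rfl)] at hy
    simp [condMean, condPr, this, pr, Set.mem_empty_iff_false]
  -- μ(x | Z_{S'}) ≤ dist x y
  have hmuX : condMean P x S' ≤ dist x y := by
    have := hLip x y S'
    rw [hmuY, sub_zero] at this
    exact (le_abs_self _).trans this
  have hmuX0 : 0 ≤ condMean P x S' :=
    div_nonneg (pr_nonneg P hP0 _) (hZ S').le
  -- main computation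
  have key : condPr P {π | π x = true ∧ π y = false} (ZS S)
      = condMean P x S' * (pr P (ZS S') / pr P (ZS S)) := by
    unfold condPr condMean condPr
    rw [hevent]
    field_simp
    rw [mul_div_mul_right _ _ (hZ S').ne']
  rw [key]
  have hratio : pr P (ZS S') / pr P (ZS S) ≤ 1 := by
    rw [div_le_one (hZ S)]
    apply pr_mono P hP0
    intro π hπ s hs
    exact hπ s (Finset.mem_insert_of_mem hs)
  have hratio0 : 0 ≤ pr P (ZS S') / pr P (ZS S) :=
    div_nonneg (pr_nonneg P hP0 _) (hZ S).le
  calc condMean P x S' * (pr P (ZS S') / pr P (ZS S))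
      ≤ condMean P x S' * 1 := by
        exact mul_le_mul_of_nonneg_left hratio hmuX0
    _ = condMean P x S' := mul_one _
    _ ≤ dist x y := hmuX
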